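/- Let 0 < γ < 1 and let r_1 < (1/(1-γ))r_2 < (1/(1-γ))^2 r_3 < … < (1/(1-γ))^{k-1} r_k ≤ 0. Fix i with 2 ≤ i ≤ k−1, and set r_low = max{r_1,…,r_{i−1}} and r_high = min{r_{i+1},…,r_k}. Then r_low < (1/(1-γ)) r_i < (1/(1-γ))^2 r_high ≤ r_high; in particular (r_low, r_i, r_high) satisfies the 3-Tiered Reward condition r_low < (1/(1-γ)) r_i < r_high. -/
import Mathlib


theorem k_tier_to_three_tier_grouping
    (γ : ℝ) (hγ0 : 0 < γ) (hγ1 : γ < 1)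
    (k : ℕ) (r : ℕ → ℝ)
    (hchain : ∀ j, 1 ≤ j → j < k →
      (1 / (1 - γ)) ^ (j - 1) * r j < (1 / (1 - γ)) ^ j * r (j + 1))
    (hlast : (1 / (1 - γ)) ^ (k - 1) * r k ≤ 0)
    (i : ℕ) (hi1 : 2 ≤ i) (hi2 : i ≤ k - 1)
    (rlow rhigh : ℝ)
    (hlow : IsGreatest (r '' Set.Icc 1 (i - 1)) rlow)
    (hhigh : IsLeast (r '' Set.Icc (i + 1) k) rhigh) :
    rlow < (1 / (1 - γ)) * r i ∧
    (1 / (1 - γ)) * r i < (1 / (1 - γ)) ^ 2 * rhigh ∧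
    (1 / (1 - γ)) ^ 2 * rhigh ≤ rhigh ∧
    (1 / (1 - γ)) * r i < rhigh := by
  set c := 1 / (1 - γ) with hcdef
  have h1γ : 0 < 1 - γ := by linarith
  have hc0 : 0 < c := by rw [hcdef]; positivity
  have hc1 : 1 < c := by
    rw [hcdef, lt_div_iff₀ h1γ]; linarith
  have hk3 : 3 ≤ k := by omega
  have amono : ∀ m n, 1 ≤ m → m < n → n ≤ k →
      c ^ (m - 1) * r m < c ^ (n - 1) * r n := by
    intro m n hm hmn hnk
    induction n with
    | zero => omega
    | succ n ih =>
      rcases Nat.lt_or_ge m n with h | h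
      · have h1 : c ^ (n - 1) * r n < c ^ n * r (n + 1) := hchain n (by omega) (by omega)
        have h2 := ih h (by omega)
        have : c ^ (m - 1) * r m < c ^ n * r (n + 1) := lt_trans h2 h1
        simpa using this
      · have hmn' : m = n := by omega
        subst hmn'
        have := hchain m (by omega) (by omega)
        simpa using this
  have aneg : ∀ j, 1 ≤ j → j ≤ k → c ^ (j - 1) * r j ≤ 0 := by
    intro j hj1 hjk
    rcases eq_or_lt_of_le hjk with h | h
    · subst h; exact hlast
    · exact (amono j k hj1 h le_rfl).le.trans hlast
  have rneg : ∀ j, 1 ≤ j → j ≤ k → r j ≤ 0 := by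
    intro j hj1 hjk
    have h := aneg j hj1 hjk
    have hp : (0:ℝ) < c ^ (j - 1) := pow_pos hc0 _
    by_contra hcon
    push_neg at hcon
    nlinarith [mul_pos hp hcon]
  -- Part 1
  obtain ⟨m, hm, hrm⟩ := hlow.1
  simp only [Set.mem_Icc] at hm
  have hmi : m < i := by omega
  have hri : r i ≤ 0 := rneg i (by omega) (by omega)
  have part1 : rlow < c * r i := by
    have key := amono m i hm.1 hmi (by omega)
    have hexp : i - 1 = (m - 1) + (i - m) := by omega
    rw [hexp, pow_add, mul_assoc] at key
    have key2 : r m < c ^ (i - m) * r i :=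
      lt_of_mul_lt_mul_left key (pow_pos hc0 (m - 1)).le
    have hcpow : c ≤ c ^ (i - m) := by
      calc c = c ^ 1 := (pow_one c).symm
        _ ≤ c ^ (i - m) := pow_le_pow_right₀ hc1.le (by omega)
    have : c ^ (i - m) * r i ≤ c * r i := mul_le_mul_of_nonpos_right hcpow hri
    rw [← hrm]
    exact lt_of_lt_of_le key2 this
  -- Part 2
  obtain ⟨n, hn, hrn⟩ := hhigh.1
  simp only [Set.mem_Icc] at hn
  have hrn0 : r n ≤ 0 := rneg n (by omega) hn.2
  have part2 : c * r i < c ^ 2 * rhigh := by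
    have key := amono i n (by omega) (by omega) hn.2
    have hexp : n - 1 = (i - 1) + (n - i) := by omega
    rw [hexp, pow_add, mul_assoc] at key
    have key2 : r i < c ^ (n - i) * r n :=
      lt_of_mul_lt_mul_left key (pow_pos hc0 (i - 1)).le
    have key3 : c * r i < c ^ (n - i + 1) * r n := by
      have := mul_lt_mul_of_pos_left key2 hc0
      calc c * r i < c * (c ^ (n - i) * r n) := this
        _ = c ^ (n - i + 1) * r n := by ring
    have hcpow : c ^ 2 ≤ c ^ (n - i + 1) := pow_le_pow_right₀ hc1.le (by omega)
    have : c ^ (n - i + 1) * r n ≤ c ^ 2 * r n := mul_le_mul_of_nonpos_right hcpow hrn0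
    rw [← hrn]
    exact lt_of_lt_of_le key3 this
  have part3 : c ^ 2 * rhigh ≤ rhigh := by
    have hrh : rhigh ≤ 0 := hrn ▸ hrn0
    have h1 : (1:ℝ) ≤ c ^ 2 := one_le_pow₀ hc1.le
    nlinarith
  exact ⟨part1, part2, part3, lt_of_lt_of_le part2 part3⟩
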